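/- arXiv:2009.04379 — 4 statements merged into one kernel-verified Lean document; each statement's English description precedes it below -/
import Mathlib

section
/- For every natural number n, (-1)^n · W_n(-1) = f_n^{(4)}, where W_n(x) = ∑_{k=0}^n C(n,k)·C(n+k,k)·C(2k,k)·C(2(n-k),n-k)·x^k and f_n^{(4)} = ∑_{k=0}^n C(n,k)^4. -/
set_option maxRecDepth 8000
set_option maxHeartbeats 1600000

open Finset

namespace W4aux


lemma chq_right (m k : ℕ) :
    ((m.choose (k+1) : ℚ)) * ((k:ℚ)+1) = (m.choose k : ℚ) * ((m:ℚ) - (k:ℚ)) := by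
  rcases le_or_gt k m with h | h
  · have h1 := Nat.choose_succ_right_eq m k
    have h2 : ((m.choose (k+1):ℚ)) * (((k:ℕ)+1 : ℕ) : ℚ) = (m.choose k : ℚ) * ((m-k : ℕ) : ℚ) := by
      exact_mod_cast h1
    rw [Nat.cast_sub h] at h2
    push_cast at h2
    linarith
  · have e1 : m.choose (k+1) = 0 := Nat.choose_eq_zero_of_lt (by omega)
    have e2 : m.choose k = 0 := Nat.choose_eq_zero_of_lt h
    simp [e1, e2]

lemma chq_top (m k : ℕ) :
    (((m+1).choose k : ℚ)) * ((m:ℚ)+1-(k:ℚ)) = (m.choose k : ℚ) * ((m:ℚ)+1) := by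
  rcases le_or_gt k (m+1) with h | h
  · have h1 := Nat.choose_mul_succ_eq m k
    have h2 : (m.choose k : ℚ) * (((m:ℕ)+1 : ℕ) : ℚ) = ((m+1).choose k : ℚ) * ((m+1-k : ℕ):ℚ) := by
      exact_mod_cast h1
    rw [Nat.cast_sub h] at h2
    push_cast at h2
    linarith
  · have e1 : (m+1).choose k = 0 := Nat.choose_eq_zero_of_lt h
    have e2 : m.choose k = 0 := Nat.choose_eq_zero_of_lt (by omega)
    simp [e1, e2]

lemma chq_central (m : ℕ) :
    (((2*m+2).choose (m+1) : ℚ)) * ((m:ℚ)+1)^2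
      = ((2*m).choose m : ℚ) * (2*(m:ℚ)+1) * (2*(m:ℚ)+2) := by
  have h1 : (2*m+1).choose (m+1) = (2*m+1).choose m := by
    have := Nat.choose_symm (n := 2*m+1) (k := m) (by omega)
    rw [show 2*m+1-m = m+1 by omega] at this
    exact this
  have h2 : (2*m).choose m * (2*m+1) = (2*m+1).choose m * (m+1) := by
    have h := Nat.choose_mul_succ_eq (2*m) m
    rw [show 2*m+1-m = m+1 by omega] at h
    exact h
  have h3 : (2*m+1).choose (m+1) * (2*m+2) = (2*m+2).choose (m+1) * (m+1) := by
    have h := Nat.choose_mul_succ_eq (2*m+1) (m+1)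
    rw [show 2*m+1+1-(m+1) = m+1 by omega] at h
    rw [show 2*m+1+1 = 2*m+2 by omega] at h
    exact h
  have key : (2*m+2).choose (m+1) * ((m+1)*(m+1)) = (2*m).choose m * ((2*m+1) * (2*m+2)) := by
    calc (2*m+2).choose (m+1) * ((m+1)*(m+1))
        = ((2*m+2).choose (m+1) * (m+1)) * (m+1) := by ring
      _ = ((2*m+1).choose (m+1) * (2*m+2)) * (m+1) := by rw [h3]
      _ = ((2*m+1).choose m * (m+1)) * (2*m+2) := by rw [h1]; ring
      _ = ((2*m).choose m * (2*m+1)) * (2*m+2) := by rw [h2]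
      _ = _ := by ring
  have := congrArg (fun x : ℕ => (x : ℚ)) key
  push_cast at this
  linarith [this]

def PA (x y : ℚ) : ℚ :=
  y^4*(-(1080+5380*x+11330*x^2+13075*x^3+8930*x^4+3610*x^5+800*x^6+75*x^7))
  + y^5*(2256+9776*x+17412*x^2+16312*x^3+8476*x^4+2316*x^5+260*x^6)
  + y^6*(-(1980+7302*x+10620*x^2+7612*x^3+2688*x^4+374*x^5))
  + y^7*(900+2744*x+3088*x^2+1520*x^3+276*x^4)
  + y^8*(-(210+508*x+402*x^2+104*x^3))
  + y^9*(20+36*x+16*x^2)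

def fA (n k : ℕ) : ℚ := (n.choose k : ℚ)^4

noncomputable def gA (n k : ℕ) : ℚ :=
  PA n k * ((n+2).choose k : ℚ)^4 / (((n:ℚ)+1)^4 * ((n:ℚ)+2)^4)

lemma pointA (n k : ℕ) :
    ((n:ℚ)+2)^3 * fA (n+2) k
      - 2*(2*(n:ℚ)+3)*(3*(n:ℚ)^2+9*(n:ℚ)+7) * fA (n+1) k
      - 4*((n:ℚ)+1)*(4*(n:ℚ)+5)*(4*(n:ℚ)+3) * fA n k
    = gA n (k+1) - gA n k := by
  have h1 : ((n+1).choose k : ℚ) * ((n:ℚ)+1-(k:ℚ)) = (n.choose k : ℚ) * ((n:ℚ)+1) :=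
    chq_top n k
  have h2 : ((n+2).choose k : ℚ) * ((n:ℚ)+2-(k:ℚ)) = ((n+1).choose k : ℚ) * ((n:ℚ)+2) := by
    have h := chq_top (n+1) k
    push_cast at h ⊢
    linarith
  have h3 : ((n+2).choose (k+1) : ℚ) * ((k:ℚ)+1) = ((n+2).choose k : ℚ) * ((n:ℚ)+2-(k:ℚ)) := by
    have h := chq_right (n+2) k
    push_cast at h ⊢
    linarith
  have hbase : (n.choose k : ℚ) * (((n:ℚ)+1)*((n:ℚ)+2))
      = ((n+2).choose k : ℚ) * (((n:ℚ)+1-(k:ℚ))*((n:ℚ)+2-(k:ℚ))) := by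
    linear_combination (-((n:ℚ)+2)) * h1 - (((n:ℚ)+1-(k:ℚ))) * h2
  have H1 : ((n.choose k : ℚ) * (((n:ℚ)+1)*((n:ℚ)+2)))^4
      = (((n+2).choose k : ℚ) * (((n:ℚ)+1-(k:ℚ))*((n:ℚ)+2-(k:ℚ))))^4 := by rw [hbase]
  have H2 : (((n+1).choose k : ℚ) * ((n:ℚ)+2))^4
      = (((n+2).choose k : ℚ) * ((n:ℚ)+2-(k:ℚ)))^4 := by rw [← h2]
  have H3 : (((n+2).choose (k+1) : ℚ) * ((k:ℚ)+1))^4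
      = (((n+2).choose k : ℚ) * ((n:ℚ)+2-(k:ℚ)))^4 := by rw [h3]
  have hk : ((k:ℚ)+1) ≠ 0 := by positivity
  have hD : (((n:ℚ)+1)^4 * ((n:ℚ)+2)^4) ≠ 0 := by positivity
  rw [gA, gA, div_sub_div_same, eq_div_iff hD]
  apply mul_right_cancel₀ (pow_ne_zero 4 hk)
  simp only [fA, PA]
  push_cast
  linear_combination
    (-4*((n:ℚ)+1)*(4*(n:ℚ)+5)*(4*(n:ℚ)+3)) * ((k:ℚ)+1)^4 * H1
    + (-2*(2*(n:ℚ)+3)*(3*(n:ℚ)^2+9*(n:ℚ)+7)) * ((n:ℚ)+1)^4 * ((k:ℚ)+1)^4 * H2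
    - (((k:ℚ)+1)^4*(-(1080+5380*(n:ℚ)+11330*(n:ℚ)^2+13075*(n:ℚ)^3+8930*(n:ℚ)^4+3610*(n:ℚ)^5+800*(n:ℚ)^6+75*(n:ℚ)^7))
      + ((k:ℚ)+1)^5*(2256+9776*(n:ℚ)+17412*(n:ℚ)^2+16312*(n:ℚ)^3+8476*(n:ℚ)^4+2316*(n:ℚ)^5+260*(n:ℚ)^6)
      + ((k:ℚ)+1)^6*(-(1980+7302*(n:ℚ)+10620*(n:ℚ)^2+7612*(n:ℚ)^3+2688*(n:ℚ)^4+374*(n:ℚ)^5))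
      + ((k:ℚ)+1)^7*(900+2744*(n:ℚ)+3088*(n:ℚ)^2+1520*(n:ℚ)^3+276*(n:ℚ)^4)
      + ((k:ℚ)+1)^8*(-(210+508*(n:ℚ)+402*(n:ℚ)^2+104*(n:ℚ)^3))
      + ((k:ℚ)+1)^9*(20+36*(n:ℚ)+16*(n:ℚ)^2)) * H3


def aa (n : ℕ) : ℚ := ∑ k ∈ range (n+1), fA n k

lemma fA_zero {n k : ℕ} (h : n < k) : fA n k = 0 := by
  simp [fA, Nat.choose_eq_zero_of_lt h]

lemma aa_ext (n m : ℕ) (h : n < m) : aa n = ∑ k ∈ range m, fA n k := by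
  rw [aa]
  rw [← Finset.sum_range_add_sum_Ico _ (by omega : n+1 ≤ m)]
  have : ∑ k ∈ Finset.Ico (n+1) m, fA n k = 0 := by
    apply Finset.sum_eq_zero
    intro k hk
    exact fA_zero (by simp at hk; omega)
  rw [this, add_zero]

lemma recA (n : ℕ) :
    ((n:ℚ)+2)^3 * aa (n+2)
    = 2*(2*(n:ℚ)+3)*(3*(n:ℚ)^2+9*(n:ℚ)+7) * aa (n+1)
      + 4*((n:ℚ)+1)*(4*(n:ℚ)+5)*(4*(n:ℚ)+3) * aa n := by
  have e2 : aa (n+2) = ∑ k ∈ range (n+3), fA (n+2) k := by rw [aa]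
  have e1 : aa (n+1) = ∑ k ∈ range (n+3), fA (n+1) k := aa_ext _ _ (by omega)
  have e0 : aa n = ∑ k ∈ range (n+3), fA n k := aa_ext _ _ (by omega)
  have key : ((n:ℚ)+2)^3 * aa (n+2)
      - 2*(2*(n:ℚ)+3)*(3*(n:ℚ)^2+9*(n:ℚ)+7) * aa (n+1)
      - 4*((n:ℚ)+1)*(4*(n:ℚ)+5)*(4*(n:ℚ)+3) * aa n
      = ∑ k ∈ range (n+3), (gA n (k+1) - gA n k) := by
    rw [e2, e1, e0, Finset.mul_sum, Finset.mul_sum, Finset.mul_sum,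
      ← Finset.sum_sub_distrib, ← Finset.sum_sub_distrib]
    exact Finset.sum_congr rfl (fun k _ => pointA n k)
  rw [Finset.sum_range_sub (gA n)] at key
  have g0 : gA n 0 = 0 := by
    norm_num [gA, PA]
  have gtop : gA n (n+3) = 0 := by
    have : (n+2).choose (n+3) = 0 := Nat.choose_eq_zero_of_lt (by omega)
    simp [gA, this]
  rw [g0, gtop] at key
  linarith [key]


lemma sgn (a b : ℕ) : (-1:ℚ)^(2*a+b) = (-1)^b := by
  rw [pow_add, pow_mul, neg_one_sq, one_pow, one_mul]

def PB (x y : ℚ) : ℚ :=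
  y^3*(-(328+1276*x+1628*x^2+856*x^3+160*x^4))
  + y^4*(980+2296*x+1720*x^2+416*x^3)
  + y^5*(-(716+1000*x+352*x^2))
  + y^6*(136+96*x)

def fB (n k : ℕ) : ℚ :=
  (-1)^(n+k) * (n.choose k : ℚ) * ((n+k).choose k : ℚ) * ((2*k).choose k : ℚ)
    * ((2*(n-k)).choose (n-k) : ℚ)

noncomputable def gB (n k : ℕ) : ℚ :=
  if k ≤ n then PB n k * fB n k / (((n:ℚ)+1-(k:ℚ))^2 * ((n:ℚ)+2-(k:ℚ))^2)
  else if k = n+1 then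
    2*((n:ℚ)+1)^2*(2*(n:ℚ)+3)*((n:ℚ)+3) * (((2*n+2).choose (n+1) : ℚ))^2
  else if k = n+2 then
    -4*(2*(n:ℚ)+3)^2*((n:ℚ)+2) * (((2*n+2).choose (n+1) : ℚ))^2
  else 0

lemma pointB_interior (k m : ℕ) :
    ((((k+1+m):ℕ):ℚ)+2)^3 * fB (k+1+m+2) k
      - 2*(2*(((k+1+m):ℕ):ℚ)+3)*(3*(((k+1+m):ℕ):ℚ)^2+9*(((k+1+m):ℕ):ℚ)+7) * fB (k+1+m+1) k
      - 4*((((k+1+m):ℕ):ℚ)+1)*(4*(((k+1+m):ℕ):ℚ)+5)*(4*(((k+1+m):ℕ):ℚ)+3) * fB (k+1+m) k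
    = gB (k+1+m) (k+1) - gB (k+1+m) k := by
  have hk1 : k ≤ k+1+m := by omega
  have hk2 : k+1 ≤ k+1+m := by omega
  rw [gB, if_pos hk2, gB, if_pos hk1]
  simp only [fB, PB]
  -- sign rewrites
  rw [show ((-1:ℚ)^(k+1+m+k)) = (-1)^m * (-1) from by
        rw [show k+1+m+k = 2*k+(m+1) from by omega, sgn, pow_succ]]
  rw [show ((-1:ℚ)^(k+1+m+1+k)) = (-1)^m from by
        rw [show k+1+m+1+k = 2*(k+1)+m from by omega, sgn]]
  rw [show ((-1:ℚ)^(k+1+m+2+k)) = (-1)^m * (-1) from by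
        rw [show k+1+m+2+k = 2*(k+1)+(m+1) from by omega, sgn, pow_succ]]
  rw [show ((-1:ℚ)^(k+1+m+(k+1))) = (-1)^m from by
        rw [show k+1+m+(k+1) = 2*(k+1)+m from by omega, sgn]]
  -- ℕ argument normalizations
  simp only [show k+1+m-k = m+1 from by omega, show k+1+m+1-k = m+2 from by omega,
    show k+1+m+2-k = m+3 from by omega, show k+1+m-(k+1) = m from by omega,
    show k+1+m+(k+1) = k+1+m+1+k from by omega, show 2*(k+1) = 2*k+2 from by omega,
    show 2*(m+1) = 2*m+2 from by omega, show 2*(m+2) = 2*m+4 from by omega,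
    show 2*(m+3) = 2*m+6 from by omega]
  push_cast
  -- normalize gB denominators
  rw [show ((k:ℚ)+1+(m:ℚ)+1-((k:ℚ)+1)) = ((m:ℚ)+1) from by ring,
      show ((k:ℚ)+1+(m:ℚ)+2-((k:ℚ)+1)) = ((m:ℚ)+2) from by ring,
      show ((k:ℚ)+1+(m:ℚ)+1-(k:ℚ)) = ((m:ℚ)+2) from by ring,
      show ((k:ℚ)+1+(m:ℚ)+2-(k:ℚ)) = ((m:ℚ)+3) from by ring]
  -- quotient forms for shifted binomials
  have hx : ((k+1+m+2).choose k : ℚ)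
      = ((k+1+m+1).choose k : ℚ) * ((k:ℚ)+(m:ℚ)+3) / ((m:ℚ)+3) := by
    have h := chq_top (k+1+m+1) k
    rw [show k+1+m+1+1 = k+1+m+2 from by omega] at h
    push_cast at h
    field_simp
    linear_combination h
  have hp2 : ((k+1+m+2+k).choose k : ℚ)
      = ((k+1+m+1+k).choose k : ℚ) * (2*(k:ℚ)+(m:ℚ)+3) / ((k:ℚ)+(m:ℚ)+3) := by
    have h := chq_top (k+1+m+1+k) k
    rw [show k+1+m+1+k+1 = k+1+m+2+k from by omega] at h
    push_cast at h
    have hne : ((k:ℚ)+(m:ℚ)+3) ≠ 0 := by positivity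
    field_simp
    linear_combination h
  have hp' : ((k+1+m+1+k).choose (k+1) : ℚ)
      = ((k+1+m+1+k).choose k : ℚ) * ((k:ℚ)+(m:ℚ)+2) / ((k:ℚ)+1) := by
    have h := chq_right (k+1+m+1+k) k
    push_cast at h
    field_simp
    linear_combination h
  have hD2 : ((2*m+6).choose (m+3) : ℚ)
      = ((2*m+4).choose (m+2) : ℚ) * (2*(m:ℚ)+5) * (2*(m:ℚ)+6) / ((m:ℚ)+3)^2 := by
    have h := chq_central (m+2)
    rw [show 2*(m+2)+2 = 2*m+6 from by omega, show m+2+1 = m+3 from by omega,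
        show 2*(m+2) = 2*m+4 from by omega] at h
    push_cast at h
    field_simp
    linear_combination h
  have hv : ((k+1+m+1).choose k : ℚ)
      = ((k+1+m).choose k : ℚ) * ((k:ℚ)+(m:ℚ)+2) / ((m:ℚ)+2) := by
    have h := chq_top (k+1+m) k
    push_cast at h
    field_simp
    linear_combination h
  have hp1 : ((k+1+m+1+k).choose k : ℚ)
      = ((k+1+m+k).choose k : ℚ) * (2*(k:ℚ)+(m:ℚ)+2) / ((k:ℚ)+(m:ℚ)+2) := by
    have h := chq_top (k+1+m+k) k
    rw [show k+1+m+k+1 = k+1+m+1+k from by omega] at h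
    push_cast at h
    have hne : ((k:ℚ)+(m:ℚ)+2) ≠ 0 := by positivity
    field_simp
    linear_combination h
  have hD1 : ((2*m+4).choose (m+2) : ℚ)
      = ((2*m+2).choose (m+1) : ℚ) * (2*(m:ℚ)+3) * (2*(m:ℚ)+4) / ((m:ℚ)+2)^2 := by
    have h := chq_central (m+1)
    rw [show 2*(m+1)+2 = 2*m+4 from by omega, show m+1+1 = m+2 from by omega,
        show 2*(m+1) = 2*m+2 from by omega] at h
    push_cast at h
    field_simp
    linear_combination h
  have hu' : ((k+1+m).choose (k+1) : ℚ)
      = ((k+1+m).choose k : ℚ) * ((m:ℚ)+1) / ((k:ℚ)+1) := by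
    have h := chq_right (k+1+m) k
    push_cast at h
    field_simp
    linear_combination h
  have hq' : ((2*k+2).choose (k+1) : ℚ)
      = ((2*k).choose k : ℚ) * (2*(k:ℚ)+1) * (2*(k:ℚ)+2) / ((k:ℚ)+1)^2 := by
    have h := chq_central k
    push_cast at h
    rw [eq_div_iff (by positivity)]
    linear_combination h
  have hD' : ((2*m).choose m : ℚ)
      = ((2*m+2).choose (m+1) : ℚ) * ((m:ℚ)+1)^2 / ((2*(m:ℚ)+1)*(2*(m:ℚ)+2)) := by
    have h := chq_central m
    push_cast at h
    have hne : (2*(m:ℚ)+1)*(2*(m:ℚ)+2) ≠ 0 := by positivity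
    rw [eq_div_iff hne]
    linear_combination -h
  rw [hx, hp2, hp', hD2, hv, hp1, hD1, hu', hq', hD']
  have n1 : ((m:ℚ)+1) ≠ 0 := by positivity
  have n2 : ((m:ℚ)+2) ≠ 0 := by positivity
  have n3 : ((m:ℚ)+3) ≠ 0 := by positivity
  have n4 : ((k:ℚ)+1) ≠ 0 := by positivity
  have n5 : ((k:ℚ)+(m:ℚ)+2) ≠ 0 := by positivity
  have n6 : ((k:ℚ)+(m:ℚ)+3) ≠ 0 := by positivity
  have n7 : (2*(m:ℚ)+1) ≠ 0 := by positivity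
  have n8 : (2*(m:ℚ)+2) ≠ 0 := by positivity
  field_simp
  ring


lemma pointB_edge0 (n : ℕ) :
    ((n:ℚ)+2)^3 * fB (n+2) n
      - 2*(2*(n:ℚ)+3)*(3*(n:ℚ)^2+9*(n:ℚ)+7) * fB (n+1) n
      - 4*((n:ℚ)+1)*(4*(n:ℚ)+5)*(4*(n:ℚ)+3) * fB n n
    = gB n (n+1) - gB n n := by
  rw [gB, if_neg (by omega), if_pos rfl, gB, if_pos (le_refl n)]
  simp only [fB, PB, Nat.sub_self, Nat.choose_self, Nat.add_sub_cancel_left]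
  rw [show ((-1:ℚ)^(n+n)) = 1 from by rw [show n+n = 2*n+0 from by omega, sgn, pow_zero]]
  rw [show ((-1:ℚ)^(n+1+n)) = -1 from by
        rw [show n+1+n = 2*n+1 from by omega, sgn, pow_one]]
  rw [show ((-1:ℚ)^(n+2+n)) = 1 from by rw [show n+2+n = 2*(n+1)+0 from by omega, sgn, pow_zero]]
  simp only [show n+1+n = 2*n+1 from by omega, show n+2+n = 2*n+2 from by omega,
    show n+n = 2*n from by omega,
    show n+2-n = 2 from by omega, show n+1-n = 1 from by omega, Nat.mul_zero,
    Nat.choose_zero_right, Nat.choose_succ_self_right,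
    show Nat.choose 4 2 = 6 from by decide, show Nat.choose 2 1 = 2 from by decide]
  norm_num
  have h1 : ((n+2).choose n : ℚ) * 2 = ((n:ℚ)+1) * ((n:ℚ)+2) := by
    have h := chq_top (n+1) n
    rw [Nat.choose_succ_self_right] at h
    push_cast at h
    linarith
  have h2 : ((2*n+1).choose n : ℚ) * ((n:ℚ)+1) = ((2*n).choose n : ℚ) * (2*(n:ℚ)+1) := by
    have h := chq_top (2*n) n
    push_cast at h
    linarith
  have h3 : ((2*n+2).choose n : ℚ) * ((n:ℚ)+2) = ((2*n+1).choose n : ℚ) * (2*(n:ℚ)+2) := by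
    have h := chq_top (2*n+1) n
    rw [show 2*n+1+1 = 2*n+2 from by omega] at h
    push_cast at h
    linarith
  have hc := chq_central n
  -- solved forms
  have e1 : ((n+2).choose n : ℚ) = ((n:ℚ)+1) * ((n:ℚ)+2) / 2 := by linarith
  have e2 : ((2*n+1).choose n : ℚ) = ((2*n).choose n : ℚ) * (2*(n:ℚ)+1) / ((n:ℚ)+1) := by
    have : ((n:ℚ)+1) ≠ 0 := by positivity
    field_simp
    linarith
  have e3 : ((2*n+2).choose n : ℚ)
      = ((2*n+1).choose n : ℚ) * (2*(n:ℚ)+2) / ((n:ℚ)+2) := by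
    have : ((n:ℚ)+2) ≠ 0 := by positivity
    field_simp
    linarith
  have e4 : ((2*n+2).choose (n+1) : ℚ)
      = ((2*n).choose n : ℚ) * (2*(n:ℚ)+1) * (2*(n:ℚ)+2) / ((n:ℚ)+1)^2 := by
    have : ((n:ℚ)+1) ≠ 0 := by positivity
    rw [eq_div_iff (by positivity)]
    linear_combination hc
  rw [e1, e3, e2, e4]
  have n1 : ((n:ℚ)+1) ≠ 0 := by positivity
  have n2 : ((n:ℚ)+2) ≠ 0 := by positivity
  field_simp
  ring

lemma pointB_edge1 (n : ℕ) :
    ((n:ℚ)+2)^3 * fB (n+2) (n+1)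
      - 2*(2*(n:ℚ)+3)*(3*(n:ℚ)^2+9*(n:ℚ)+7) * fB (n+1) (n+1)
      - 4*((n:ℚ)+1)*(4*(n:ℚ)+5)*(4*(n:ℚ)+3) * fB n (n+1)
    = gB n (n+2) - gB n (n+1) := by
  rw [gB, if_neg (by omega), if_neg (by omega), if_pos rfl,
      gB, if_neg (by omega), if_pos rfl]
  simp only [fB, Nat.sub_self, Nat.choose_self, Nat.add_sub_cancel_left]
  rw [show ((-1:ℚ)^(n+(n+1))) = -1 from by
        rw [show n+(n+1) = 2*n+1 from by omega, sgn, pow_one]]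
  rw [show ((-1:ℚ)^(n+1+(n+1))) = 1 from by
        rw [show n+1+(n+1) = 2*(n+1)+0 from by omega, sgn, pow_zero]]
  rw [show ((-1:ℚ)^(n+2+(n+1))) = -1 from by
        rw [show n+2+(n+1) = 2*(n+1)+1 from by omega, sgn, pow_one]]
  simp only [show n+1+(n+1) = 2*n+2 from by omega, show n+2+(n+1) = 2*n+3 from by omega,
    show n+2-(n+1) = 1 from by omega, show 2*(n+1) = 2*n+2 from by omega,
    Nat.choose_succ_self_right, Nat.mul_zero, Nat.choose_zero_right,
    Nat.choose_eq_zero_of_lt (by omega : n < n+1)]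
  norm_num
  have h1 : ((2*n+3).choose (n+1) : ℚ) * ((n:ℚ)+2) = ((2*n+2).choose (n+1) : ℚ) * (2*(n:ℚ)+3) := by
    have h := chq_top (2*n+2) (n+1)
    rw [show 2*n+2+1 = 2*n+3 from by omega] at h
    push_cast at h
    linarith
  have e1 : ((2*n+3).choose (n+1) : ℚ)
      = ((2*n+2).choose (n+1) : ℚ) * (2*(n:ℚ)+3) / ((n:ℚ)+2) := by
    have : ((n:ℚ)+2) ≠ 0 := by positivity
    field_simp
    linarith
  rw [e1]
  have n2 : ((n:ℚ)+2) ≠ 0 := by positivity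
  field_simp
  ring

lemma pointB_edge2 (n : ℕ) :
    ((n:ℚ)+2)^3 * fB (n+2) (n+2)
      - 2*(2*(n:ℚ)+3)*(3*(n:ℚ)^2+9*(n:ℚ)+7) * fB (n+1) (n+2)
      - 4*((n:ℚ)+1)*(4*(n:ℚ)+5)*(4*(n:ℚ)+3) * fB n (n+2)
    = gB n (n+3) - gB n (n+2) := by
  rw [gB, if_neg (by omega), if_neg (by omega), if_neg (by omega),
      gB, if_neg (by omega), if_neg (by omega), if_pos rfl]
  simp only [fB, Nat.sub_self, Nat.choose_self, Nat.add_sub_cancel_left]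
  rw [show ((-1:ℚ)^(n+2+(n+2))) = 1 from by
        rw [show n+2+(n+2) = 2*(n+2)+0 from by omega, sgn, pow_zero]]
  simp only [show n+2+(n+2) = 2*n+4 from by omega, show 2*(n+2) = 2*n+4 from by omega,
    Nat.mul_zero, Nat.choose_zero_right,
    Nat.choose_eq_zero_of_lt (by omega : n < n+2),
    Nat.choose_eq_zero_of_lt (by omega : n+1 < n+2)]
  norm_num
  have hc := chq_central (n+1)
  rw [show 2*(n+1)+2 = 2*n+4 from by omega, show n+1+1 = n+2 from by omega,
      show 2*(n+1) = 2*n+2 from by omega] at hc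
  push_cast at hc
  have e1 : ((2*n+4).choose (n+2) : ℚ)
      = ((2*n+2).choose (n+1) : ℚ) * (2*(n:ℚ)+3) * (2*(n:ℚ)+4) / ((n:ℚ)+2)^2 := by
    have : ((n:ℚ)+2) ≠ 0 := by positivity
    field_simp
    linear_combination hc
  rw [e1]
  have n2 : ((n:ℚ)+2) ≠ 0 := by positivity
  field_simp
  ring


lemma pointB (n k : ℕ) (hk : k < n + 3) :
    ((n:ℚ)+2)^3 * fB (n+2) k
      - 2*(2*(n:ℚ)+3)*(3*(n:ℚ)^2+9*(n:ℚ)+7) * fB (n+1) k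
      - 4*((n:ℚ)+1)*(4*(n:ℚ)+5)*(4*(n:ℚ)+3) * fB n k
    = gB n (k+1) - gB n k := by
  rcases lt_trichotomy k n with h | rfl | h
  · obtain ⟨m, rfl⟩ : ∃ m, n = k+1+m := ⟨n-(k+1), by omega⟩
    exact pointB_interior k m
  · exact pointB_edge0 k
  · rcases (by omega : k = n+1 ∨ k = n+2) with rfl | rfl
    · exact pointB_edge1 n
    · exact pointB_edge2 n

def bb (n : ℕ) : ℚ := ∑ k ∈ range (n+1), fB n k

lemma fB_zero {n k : ℕ} (h : n < k) : fB n k = 0 := by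
  simp [fB, Nat.choose_eq_zero_of_lt h]

lemma bb_ext (n m : ℕ) (h : n < m) : bb n = ∑ k ∈ range m, fB n k := by
  rw [bb, ← Finset.sum_range_add_sum_Ico _ (by omega : n+1 ≤ m)]
  have : ∑ k ∈ Finset.Ico (n+1) m, fB n k = 0 := by
    apply Finset.sum_eq_zero
    intro k hk
    exact fB_zero (by simp at hk; omega)
  rw [this, add_zero]

lemma recB (n : ℕ) :
    ((n:ℚ)+2)^3 * bb (n+2)
    = 2*(2*(n:ℚ)+3)*(3*(n:ℚ)^2+9*(n:ℚ)+7) * bb (n+1)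
      + 4*((n:ℚ)+1)*(4*(n:ℚ)+5)*(4*(n:ℚ)+3) * bb n := by
  have e2 : bb (n+2) = ∑ k ∈ range (n+3), fB (n+2) k := by rw [bb]
  have e1 : bb (n+1) = ∑ k ∈ range (n+3), fB (n+1) k := bb_ext _ _ (by omega)
  have e0 : bb n = ∑ k ∈ range (n+3), fB n k := bb_ext _ _ (by omega)
  have key : ((n:ℚ)+2)^3 * bb (n+2)
      - 2*(2*(n:ℚ)+3)*(3*(n:ℚ)^2+9*(n:ℚ)+7) * bb (n+1)
      - 4*((n:ℚ)+1)*(4*(n:ℚ)+5)*(4*(n:ℚ)+3) * bb n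
      = ∑ k ∈ range (n+3), (gB n (k+1) - gB n k) := by
    rw [e2, e1, e0, Finset.mul_sum, Finset.mul_sum, Finset.mul_sum,
      ← Finset.sum_sub_distrib, ← Finset.sum_sub_distrib]
    refine Finset.sum_congr rfl (fun k hk => pointB n k ?_)
    simp at hk; omega
  rw [Finset.sum_range_sub (gB n)] at key
  have g0 : gB n 0 = 0 := by
    rw [gB, if_pos (by omega)]
    norm_num [PB]
  have gtop : gB n (n+3) = 0 := by
    rw [gB, if_neg (by omega), if_neg (by omega), if_neg (by omega)]
  rw [g0, gtop] at key
  linarith [key]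

lemma aa0 : aa 0 = 1 := by simp [aa, fA]
lemma bb0 : bb 0 = 1 := by simp [bb, fB]
lemma aa1 : aa 1 = 2 := by
  simp [aa, fA, Finset.sum_range_succ]
  norm_num
lemma bb1 : bb 1 = 2 := by
  simp [bb, fB, Finset.sum_range_succ]
  norm_num

lemma main (n : ℕ) : aa n = bb n := by
  have key : ∀ n, aa n = bb n ∧ aa (n+1) = bb (n+1) := by
    intro n
    induction n with
    | zero => exact ⟨aa0.trans bb0.symm, aa1.trans bb1.symm⟩
    | succ n ih =>
      refine ⟨ih.2, ?_⟩
      have hA := recA n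
      have hB := recB n
      rw [ih.1, ih.2] at hA
      have hne : ((n:ℚ)+2)^3 ≠ 0 := by positivity
      have h2 : ((n:ℚ)+2)^3 * aa (n+2) = ((n:ℚ)+2)^3 * bb (n+2) := hA.trans hB.symm
      exact mul_left_cancel₀ hne h2
  exact (key n).1

end W4aux

open W4aux

theorem W_at_neg_one_eq_franel4 (n : ℕ) :
    (-1 : ℤ) ^ n *
      ∑ k ∈ Finset.range (n + 1),
        (Nat.choose n k * Nat.choose (n + k) k * Nat.choose (2 * k) k *
          Nat.choose (2 * (n - k)) (n - k) : ℤ) * (-1) ^ k =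
    ∑ k ∈ Finset.range (n + 1), (Nat.choose n k : ℤ) ^ 4 := by
  have hbb : ((-1:ℚ))^n * ∑ k ∈ Finset.range (n+1),
      ((n.choose k : ℚ) * ((n+k).choose k : ℚ) * ((2*k).choose k : ℚ)
        * ((2*(n-k)).choose (n-k) : ℚ)) * (-1)^k = bb n := by
    rw [bb, Finset.mul_sum]
    refine Finset.sum_congr rfl (fun k _ => ?_)
    rw [fB, pow_add]
    ring
  have haa : aa n = ∑ k ∈ Finset.range (n+1), ((n.choose k : ℚ))^4 := by
    simp [aa, fA]
  have hq : ((-1:ℚ))^n * ∑ k ∈ Finset.range (n+1),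
      ((n.choose k : ℚ) * ((n+k).choose k : ℚ) * ((2*k).choose k : ℚ)
        * ((2*(n-k)).choose (n-k) : ℚ)) * (-1)^k
      = ∑ k ∈ Finset.range (n+1), ((n.choose k : ℚ))^4 := by
    rw [hbb, ← main n, haa]
  exact_mod_cast hq
end

section
/- The Franel numbers of order four f_n^{(4)} = ∑_{k=0}^n C(n,k)^4 satisfy the recurrence (n+2)^3 · f_{n+2}^{(4)} = 4(n+1)(4n+3)(4n+5) · f_n^{(4)} + 2(2n+3)(3n^2+9n+7) · f_{n+1}^{(4)} for all natural numbers n. -/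
open Finset

/-- Zeilberger certificate polynomial for the order-4 Franel recurrence. -/
def yc (n k : ℚ) : ℚ :=
  - (1080 : ℚ) - (5380 : ℚ) * n - (11330 : ℚ) * n^2 - (13075 : ℚ) * n^3 - (8930 : ℚ) * n^4
  - (3610 : ℚ) * n^5 - (800 : ℚ) * n^6 - (75 : ℚ) * n^7 + (2256 : ℚ) * k + (9776 : ℚ) * n * k
  + (17412 : ℚ) * n^2 * k + (16312 : ℚ) * n^3 * k + (8476 : ℚ) * n^4 * k + (2316 : ℚ) * n^5 * k
  + (260 : ℚ) * n^6 * k - (1980 : ℚ) * k^2 - (7302 : ℚ) * n * k^2 - (10620 : ℚ) * n^2 * k^2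
  - (7612 : ℚ) * n^3 * k^2 - (2688 : ℚ) * n^4 * k^2 - (374 : ℚ) * n^5 * k^2 + (900 : ℚ) * k^3
  + (2744 : ℚ) * n * k^3 + (3088 : ℚ) * n^2 * k^3 + (1520 : ℚ) * n^3 * k^3 + (276 : ℚ) * n^4 * k^3
  - (210 : ℚ) * k^4 - (508 : ℚ) * n * k^4 - (402 : ℚ) * n^2 * k^4 - (104 : ℚ) * n^3 * k^4
  + (20 : ℚ) * k^5 + (36 : ℚ) * n * k^5 + (16 : ℚ) * n^2 * k^5

/-- The WZ-pair companion term. -/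
def gg (n k : ℕ) : ℚ :=
  (k : ℚ)^4 * yc (n : ℚ) (k : ℚ) * ((Nat.choose (n+2) k : ℕ) : ℚ)^4

lemma key (n k : ℕ) :
    ((n:ℚ)+1)^4 * ((n:ℚ)+2)^4 * ((n:ℚ)+2)^3 * ((Nat.choose (n+2) k : ℕ) : ℚ)^4 + gg n k
      = ((n:ℚ)+1)^4 * ((n:ℚ)+2)^4 * (4*((n:ℚ)+1)*(4*(n:ℚ)+3)*(4*(n:ℚ)+5))
          * ((Nat.choose n k : ℕ) : ℚ)^4
        + ((n:ℚ)+1)^4 * ((n:ℚ)+2)^4 * (2*(2*(n:ℚ)+3)*(3*(n:ℚ)^2+9*(n:ℚ)+7))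
          * ((Nat.choose (n+1) k : ℕ) : ℚ)^4
        + gg n (k+1) := by
  rcases le_or_gt k n with hk | hk
  · -- main case: k ≤ n
    have hu : ((n:ℚ)+1-(k:ℚ)) ≠ 0 := by
      have : (k:ℚ) ≤ (n:ℚ) := by exact_mod_cast hk
      linarith
    have hv : ((n:ℚ)+2-(k:ℚ)) ≠ 0 := by
      have : (k:ℚ) ≤ (n:ℚ) := by exact_mod_cast hk
      linarith
    have hk1 : ((k:ℚ)+1) ≠ 0 := by positivity
    have h1 : ((Nat.choose (n+1) k : ℕ) : ℚ) * ((n:ℚ)+1-(k:ℚ))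
        = ((n:ℚ)+1) * ((Nat.choose n k : ℕ) : ℚ) := by
      have h := Nat.choose_mul_succ_eq n k
      have hsub : ((n + 1 - k : ℕ) : ℚ) = (n:ℚ)+1-(k:ℚ) := by
        have : k ≤ n + 1 := by omega
        push_cast [Nat.cast_sub this]; ring
      have h' : ((Nat.choose n k * (n+1) : ℕ) : ℚ)
          = ((Nat.choose (n+1) k * (n+1-k) : ℕ) : ℚ) := Nat.cast_inj.mpr h
      push_cast at h'
      rw [hsub] at h'
      linarith
    have h2 : ((Nat.choose (n+2) k : ℕ) : ℚ) * ((n:ℚ)+2-(k:ℚ))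
        = ((n:ℚ)+2) * ((Nat.choose (n+1) k : ℕ) : ℚ) := by
      have h := Nat.choose_mul_succ_eq (n+1) k
      have hsub : ((n + 1 + 1 - k : ℕ) : ℚ) = (n:ℚ)+2-(k:ℚ) := by
        have : k ≤ n + 1 + 1 := by omega
        push_cast [Nat.cast_sub this]; ring
      have h' : ((Nat.choose (n+1) k * (n+1+1) : ℕ) : ℚ)
          = ((Nat.choose (n+1+1) k * (n+1+1-k) : ℕ) : ℚ) := Nat.cast_inj.mpr h
      push_cast at h'
      rw [hsub] at h'
      have e : n + 1 + 1 = n + 2 := rfl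
      rw [e] at h'
      linarith
    have h3 : ((Nat.choose (n+2) (k+1) : ℕ) : ℚ) * ((k:ℚ)+1)
        = ((n:ℚ)+2) * ((Nat.choose (n+1) k : ℕ) : ℚ) := by
      have h := Nat.add_one_mul_choose_eq (n+1) k
      have h' : (((n+1)+1) * Nat.choose (n+1) k : ℕ) = (Nat.choose (n+2) (k+1) * (k+1) : ℕ) := by
        exact_mod_cast h
      have h'' : ((((n+1)+1) * Nat.choose (n+1) k : ℕ) : ℚ)
          = ((Nat.choose (n+2) (k+1) * (k+1) : ℕ) : ℚ) := Nat.cast_inj.mpr h'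
      push_cast at h''
      linarith
    have e1 : ((Nat.choose (n+1) k : ℕ) : ℚ)
        = ((n:ℚ)+1) * ((Nat.choose n k : ℕ) : ℚ) / ((n:ℚ)+1-(k:ℚ)) := by
      rw [eq_div_iff hu]; exact h1
    have e2 : ((Nat.choose (n+2) k : ℕ) : ℚ)
        = ((n:ℚ)+2) * ((Nat.choose (n+1) k : ℕ) : ℚ) / ((n:ℚ)+2-(k:ℚ)) := by
      rw [eq_div_iff hv]; exact h2
    have e3 : ((Nat.choose (n+2) (k+1) : ℕ) : ℚ)
        = ((n:ℚ)+2) * ((Nat.choose (n+1) k : ℕ) : ℚ) / ((k:ℚ)+1) := by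
      rw [eq_div_iff hk1]; exact h3
    simp only [gg, yc]
    rw [e3, e2, e1]
    push_cast
    field_simp
    ring
  · rcases (by omega : k = n+1 ∨ k = n+2 ∨ n+3 ≤ k) with h | h | h
    · subst h
      have v1 : Nat.choose n (n+1) = 0 := Nat.choose_succ_self n
      have v2 : Nat.choose (n+1) (n+1) = 1 := Nat.choose_self (n+1)
      have v3 : Nat.choose (n+2) (n+1) = n+2 := Nat.choose_succ_self_right (n+1)
      have v4 : Nat.choose (n+2) (n+1+1) = 1 := Nat.choose_self (n+2)
      simp only [gg, yc, v1, v2, v3, v4]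
      push_cast
      ring
    · subst h
      have v1 : Nat.choose n (n+2) = 0 := Nat.choose_eq_zero_of_lt (by omega)
      have v2 : Nat.choose (n+1) (n+2) = 0 := Nat.choose_eq_zero_of_lt (by omega)
      have v3 : Nat.choose (n+2) (n+2) = 1 := Nat.choose_self (n+2)
      have v4 : Nat.choose (n+2) (n+2+1) = 0 := Nat.choose_succ_self (n+2)
      simp only [gg, yc, v1, v2, v3, v4]
      push_cast
      ring
    · have v1 : Nat.choose n k = 0 := Nat.choose_eq_zero_of_lt (by omega)
      have v2 : Nat.choose (n+1) k = 0 := Nat.choose_eq_zero_of_lt (by omega)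
      have v3 : Nat.choose (n+2) k = 0 := Nat.choose_eq_zero_of_lt (by omega)
      have v4 : Nat.choose (n+2) (k+1) = 0 := Nat.choose_eq_zero_of_lt (by omega)
      simp only [gg, yc, v1, v2, v3, v4]
      push_cast
      ring

theorem franel4_recurrence (n : ℕ) :
    (n + 2) ^ 3 * ∑ k ∈ Finset.range (n + 3), (Nat.choose (n + 2) k) ^ 4 =
      4 * (n + 1) * (4 * n + 3) * (4 * n + 5) *
        ∑ k ∈ Finset.range (n + 1), (Nat.choose n k) ^ 4 +
      2 * (2 * n + 3) * (3 * n ^ 2 + 9 * n + 7) *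
        ∑ k ∈ Finset.range (n + 2), (Nat.choose (n + 1) k) ^ 4 := by
  -- work in ℚ
  set A2 : ℚ := ((n:ℚ)+1)^4 * ((n:ℚ)+2)^4 * ((n:ℚ)+2)^3 with hA2
  set A0 : ℚ := ((n:ℚ)+1)^4 * ((n:ℚ)+2)^4 * (4*((n:ℚ)+1)*(4*(n:ℚ)+3)*(4*(n:ℚ)+5)) with hA0
  set A1 : ℚ := ((n:ℚ)+1)^4 * ((n:ℚ)+2)^4 * (2*(2*(n:ℚ)+3)*(3*(n:ℚ)^2+9*(n:ℚ)+7)) with hA1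
  have hsum : A2 * (∑ k ∈ Finset.range (n+3), ((Nat.choose (n+2) k : ℕ) : ℚ)^4)
        + ∑ k ∈ Finset.range (n+3), gg n k
      = A0 * (∑ k ∈ Finset.range (n+3), ((Nat.choose n k : ℕ) : ℚ)^4)
        + A1 * (∑ k ∈ Finset.range (n+3), ((Nat.choose (n+1) k : ℕ) : ℚ)^4)
        + ∑ k ∈ Finset.range (n+3), gg n (k+1) := by
    rw [Finset.mul_sum, Finset.mul_sum, Finset.mul_sum, ← Finset.sum_add_distrib,
      ← Finset.sum_add_distrib, ← Finset.sum_add_distrib]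
    exact Finset.sum_congr rfl (fun k _ => key n k)
  have hgm : gg n (n+3) = 0 := by
    have : Nat.choose (n+2) (n+3) = 0 := Nat.choose_succ_self (n+2)
    simp [gg, this]
  have hg0 : gg n 0 = 0 := by simp [gg]
  have hshift : ∑ k ∈ Finset.range (n+3), gg n (k+1)
      = ∑ k ∈ Finset.range (n+3), gg n k + gg n (n+3) - gg n 0 := by
    have h1 := Finset.sum_range_succ' (gg n) (n+3)
    have h2 := Finset.sum_range_succ (gg n) (n+3)
    rw [h2] at h1
    linarith
  rw [hshift, hgm, hg0] at hsum
  have hq : ∑ k ∈ Finset.range (n+3), ((Nat.choose n k : ℕ) : ℚ)^4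
      = ∑ k ∈ Finset.range (n+1), ((Nat.choose n k : ℕ) : ℚ)^4 := by
    rw [show n+3 = (n+1)+1+1 from rfl, Finset.sum_range_succ, Finset.sum_range_succ,
      Nat.choose_eq_zero_of_lt (by omega : n < n+1+1), Nat.choose_eq_zero_of_lt (by omega : n < n+1)]
    norm_num
  have hr : ∑ k ∈ Finset.range (n+3), ((Nat.choose (n+1) k : ℕ) : ℚ)^4
      = ∑ k ∈ Finset.range (n+2), ((Nat.choose (n+1) k : ℕ) : ℚ)^4 := by
    rw [show n+3 = (n+2)+1 from rfl, Finset.sum_range_succ,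
      Nat.choose_eq_zero_of_lt (by omega : n+1 < n+2)]
    norm_num
  rw [hq, hr] at hsum
  have hc : (((n:ℚ)+1)^4 * ((n:ℚ)+2)^4) ≠ 0 := by positivity
  have final : ((n:ℚ)+2)^3 * (∑ k ∈ Finset.range (n+3), ((Nat.choose (n+2) k : ℕ) : ℚ)^4)
      = (4*((n:ℚ)+1)*(4*(n:ℚ)+3)*(4*(n:ℚ)+5))
          * (∑ k ∈ Finset.range (n+1), ((Nat.choose n k : ℕ) : ℚ)^4)
        + (2*(2*(n:ℚ)+3)*(3*(n:ℚ)^2+9*(n:ℚ)+7))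
          * (∑ k ∈ Finset.range (n+2), ((Nat.choose (n+1) k : ℕ) : ℚ)^4) := by
    apply mul_left_cancel₀ hc
    rw [hA2] at hsum
    linear_combination hsum
  rw [← @Nat.cast_inj ℚ]
  push_cast
  linear_combination final
end

section
/- For every positive integer n, 4n(4n+1)(4n−1)·f_{n−1}^{(4)} = (n+1)^3·f_{n+1}^{(4)} − 2(2n+1)(3n^2+3n+1)·f_n^{(4)}, where f_m^{(4)} = ∑_{k=0}^m C(m,k)^4. -/
open Finset

/-- WZ certificate polynomial. -/
def Qc (N K : ℤ) : ℤ :=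
  (-75*N^7 - 275*N^6 - 385*N^5 - 255*N^4 - 80*N^3 - 10*N^2)
  + (260*N^6 + 756*N^5 + 796*N^4 + 368*N^3 + 72*N^2 + 4*N)*K
  + (-374*N^5 - 818*N^4 - 600*N^3 - 172*N^2 - 16*N)*K^2
  + (276*N^4 + 416*N^3 + 184*N^2 + 24*N)*K^3
  + (-104*N^3 - 90*N^2 - 16*N)*K^4
  + (16*N^2 + 4*N)*K^5

lemma franel4_key (n j : ℕ) (hn : 1 ≤ n) (hj : j ≤ n) :
    (n:ℤ)^4 * ((n+1)^3 * ((n+1).choose (j+1) : ℤ)^4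
      - 2*(2*n+1)*(3*(n:ℤ)^2+3*n+1) * (n.choose (j+1) : ℤ)^4
      - 4*n*(4*n+1)*(4*(n:ℤ)-1) * ((n-1).choose (j+1) : ℤ)^4)
    = Qc n (j+2) * (n.choose (j+1) : ℤ)^4 - Qc n (j+1) * (n.choose j : ℤ)^4 := by
  have h : (n.choose (j+1) : ℤ) * ((j:ℤ)+1) = (n.choose j : ℤ) * ((n:ℤ) - j) := by
    have := congrArg (Nat.cast (R := ℤ)) (Nat.choose_succ_right_eq n j)
    push_cast [Nat.cast_sub hj] at this
    linear_combination this
  have hd : (n:ℤ) * ((n-1).choose (j+1) : ℤ)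
      = (n.choose (j+1) : ℤ) * ((n:ℤ) - ((j:ℤ)+1)) := by
    rcases eq_or_lt_of_le hj with rfl | hjn
    · have e1 : (j-1).choose (j+1) = 0 := Nat.choose_eq_zero_of_lt (by omega)
      have e2 : j.choose (j+1) = 0 := Nat.choose_succ_self j
      simp [e1, e2]
    · obtain ⟨m, rfl⟩ : ∃ m, n = m + 1 := ⟨n - 1, by omega⟩
      have h3 : (m+1) * m.choose (j+1) = (m+1).choose (j+1) * ((m+1) - (j+1)) :=
        (Nat.add_one_mul_choose_eq m (j+1)).trans (Nat.choose_succ_right_eq (m+1) (j+1))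
      have hc := congrArg (Nat.cast (R := ℤ)) h3
      push_cast [Nat.cast_sub (show j ≤ m by omega)] at hc
      simp only [Nat.add_sub_cancel]
      push_cast
      linear_combination hc
  have hp : ((n+1).choose (j+1) : ℤ) = (n.choose j : ℤ) + (n.choose (j+1) : ℤ) := by
    have := Nat.choose_succ_succ n j
    exact_mod_cast congrArg (Nat.cast : ℕ → ℤ) this
  rw [hp]
  set N : ℤ := (n:ℤ)
  set a : ℤ := (n.choose j : ℤ)
  set b : ℤ := (n.choose (j+1) : ℤ)
  set d : ℤ := ((n-1).choose (j+1) : ℤ)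
  simp only [Qc]
  linear_combination
    ((((10)*N^2 + (70)*N^3 + (184)*N^4 + (198)*N^5 + (74)*N^6 + (-4)*N^1*((j:ℤ)+1)^1 + (-58)*N^2*((j:ℤ)+1)^1 + (-240)*N^3*((j:ℤ)+1)^1 + (-372)*N^4*((j:ℤ)+1)^1 + (-186)*N^5*((j:ℤ)+1)^1 + (12)*N^1*((j:ℤ)+1)^2 + (102)*N^2*((j:ℤ)+1)^2 + (258)*N^3*((j:ℤ)+1)^2 + (188)*N^4*((j:ℤ)+1)^2 + (-12)*N^1*((j:ℤ)+1)^3 + (-70)*N^2*((j:ℤ)+1)^3 + (-88)*N^3*((j:ℤ)+1)^3 + (4)*N^1*((j:ℤ)+1)^4 + (16)*N^2*((j:ℤ)+1)^4)) * a^3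
    + (((-4)*N^4 + (-8)*N^5 + (-4)*N^6 + (10)*N^2*((j:ℤ)+1)^1 + (60)*N^3*((j:ℤ)+1)^1 + (120)*N^4*((j:ℤ)+1)^1 + (70)*N^5*((j:ℤ)+1)^1 + (-4)*N^1*((j:ℤ)+1)^2 + (-44)*N^2*((j:ℤ)+1)^2 + (-136)*N^3*((j:ℤ)+1)^2 + (-116)*N^4*((j:ℤ)+1)^2 + (8)*N^1*((j:ℤ)+1)^3 + (50)*N^2*((j:ℤ)+1)^3 + (72)*N^3*((j:ℤ)+1)^3 + (-4)*N^1*((j:ℤ)+1)^4 + (-16)*N^2*((j:ℤ)+1)^4)) * a^2 * b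
    + (((-6)*N^4 + (-12)*N^5 + (-6)*N^6 + (-10)*N^4*((j:ℤ)+1)^1 + (-10)*N^5*((j:ℤ)+1)^1 + (10)*N^2*((j:ℤ)+1)^2 + (50)*N^3*((j:ℤ)+1)^2 + (60)*N^4*((j:ℤ)+1)^2 + (-4)*N^1*((j:ℤ)+1)^3 + (-30)*N^2*((j:ℤ)+1)^3 + (-56)*N^3*((j:ℤ)+1)^3 + (4)*N^1*((j:ℤ)+1)^4 + (16)*N^2*((j:ℤ)+1)^4)) * a * b^2
    + (((-4)*N^4 + (-8)*N^5 + (-4)*N^6 + (-10)*N^4*((j:ℤ)+1)^1 + (-10)*N^5*((j:ℤ)+1)^1 + (-20)*N^4*((j:ℤ)+1)^2 + (10)*N^2*((j:ℤ)+1)^3 + (40)*N^3*((j:ℤ)+1)^3 + (-4)*N^1*((j:ℤ)+1)^4 + (-16)*N^2*((j:ℤ)+1)^4)) * b^3) * h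
    - (4*N*(4*N+1)*(4*N-1)) *
      ((N*d)^3 + (N*d)^2*(b*(N-((j:ℤ)+1))) + (N*d)*(b*(N-((j:ℤ)+1)))^2
        + (b*(N-((j:ℤ)+1)))^3) * hd

theorem franel4_shifted_recurrence (n : ℕ) (hn : 1 ≤ n)
    (f : ℕ → ℤ)
    (hf : ∀ m : ℕ, f m = ∑ k ∈ Finset.range (m + 1), (Nat.choose m k : ℤ) ^ 4) :
    4 * n * (4 * n + 1) * (4 * n - 1) * f (n - 1) =
      (n + 1) ^ 3 * f (n + 1) - 2 * (2 * n + 1) * (3 * n ^ 2 + 3 * n + 1) * f n := by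
  set T : ℕ → ℤ := fun k =>
    ((n:ℤ)+1)^3 * ((n+1).choose k : ℤ)^4
      - 2*(2*(n:ℤ)+1)*(3*(n:ℤ)^2+3*n+1) * (n.choose k : ℤ)^4
      - 4*(n:ℤ)*(4*n+1)*(4*(n:ℤ)-1) * ((n-1).choose k : ℤ)^4 with hT
  have aux : ∀ m, m ≤ n + 1 →
      ∑ k ∈ Finset.range (m+1), (n:ℤ)^4 * T k
        = Qc n (m+1) * (n.choose m : ℤ)^4 := by
    intro m
    induction m with
    | zero =>
      intro _
      rw [Finset.sum_range_one]
      simp only [hT, Nat.choose_zero_right, Nat.cast_one, one_pow, Qc]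
      push_cast
      ring
    | succ m ih =>
      intro hm
      rw [Finset.sum_range_succ, ih (by omega)]
      have hkey := franel4_key n m hn (by omega)
      have : (n:ℤ)^4 * T (m+1)
          = Qc n (m+2) * (n.choose (m+1) : ℤ)^4 - Qc n (m+1) * (n.choose m : ℤ)^4 := by
        rw [hT]
        convert hkey using 2 <;> push_cast <;> ring
      rw [this]
      push_cast
      ring
  have hzero : ∑ k ∈ Finset.range (n+2), (n:ℤ)^4 * T k = 0 := by
    have := aux (n+1) le_rfl
    rw [show n + 2 = (n+1) + 1 from rfl, this, Nat.choose_succ_self]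
    simp
  have hB : ∑ k ∈ Finset.range (n+2), (n.choose k : ℤ)^4 = f n := by
    rw [hf, Finset.sum_range_succ, Nat.choose_succ_self]
    simp
  have hC : ∑ k ∈ Finset.range (n+2), ((n-1).choose k : ℤ)^4 = f (n-1) := by
    rw [hf, show n - 1 + 1 = n from by omega,
      show n + 2 = (n+1) + 1 from rfl, Finset.sum_range_succ, Finset.sum_range_succ]
    have e1 : (n-1).choose n = 0 := Nat.choose_eq_zero_of_lt (by omega)
    have e2 : (n-1).choose (n+1) = 0 := Nat.choose_eq_zero_of_lt (by omega)
    simp [e1, e2]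
  have hA : ∑ k ∈ Finset.range (n+2), ((n+1).choose k : ℤ)^4 = f (n+1) := by
    rw [hf]
  have hexp : ∑ k ∈ Finset.range (n+2), (n:ℤ)^4 * T k
      = (n:ℤ)^4 * (((n:ℤ)+1)^3 * f (n+1)
        - 2*(2*(n:ℤ)+1)*(3*(n:ℤ)^2+3*n+1) * f n
        - 4*(n:ℤ)*(4*n+1)*(4*(n:ℤ)-1) * f (n-1)) := by
    rw [← hA, ← hB, ← hC, Finset.mul_sum, Finset.mul_sum, Finset.mul_sum]
    rw [← Finset.sum_sub_distrib, ← Finset.sum_sub_distrib, Finset.mul_sum]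
  have hne : ((n:ℤ)^4) ≠ 0 := by positivity
  have hmain : ((n:ℤ)+1)^3 * f (n+1)
      - 2*(2*(n:ℤ)+1)*(3*(n:ℤ)^2+3*n+1) * f n
      - 4*(n:ℤ)*(4*n+1)*(4*(n:ℤ)-1) * f (n-1) = 0 := by
    have := hexp.symm.trans hzero
    exact (mul_eq_zero.mp this).resolve_left hne
  push_cast
  linear_combination (-1 : ℤ) * hmain
end

section
/- For every natural number n, the polynomial F_n(x) = ∑_{k=0}^n C(n,k)·C(n+2k,2k)·C(2k,k)·x^{n−k} evaluated at x = −4 equals the Franel number f_n = ∑_{k=0}^n C(n,k)^3; that is, F_n(−4) = ∑_{k=0}^n C(n,k)^3. -/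
open Finset

set_option maxHeartbeats 1600000

namespace FranelCert

open Nat

noncomputable def aq (n k : ℕ) : ℚ :=
  (n.choose k : ℚ) * ((n+2*k).choose (2*k) : ℚ) * ((2*k).choose k : ℚ) * (-4)^(n-k)

noncomputable def bq (n k : ℕ) : ℚ := (n.choose k : ℚ) ^ 3

noncomputable def Hf (n k : ℕ) : ℚ :=
  (k : ℚ) ^ 3 *
    (14*(n:ℚ)^5+102*(n:ℚ)^4+290*(n:ℚ)^3+402*(n:ℚ)^2+272*(n:ℚ)+72
      - (k:ℚ)*(27*(n:ℚ)^4+147*(n:ℚ)^3+291*(n:ℚ)^2+249*(n:ℚ)+78)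
      + (k:ℚ)^2*(18*(n:ℚ)^3+66*(n:ℚ)^2+78*(n:ℚ)+30)
      - (k:ℚ)^3*(4*(n:ℚ)^2+8*(n:ℚ)+4)) *
    ((n+2).choose k : ℚ) ^ 3

noncomputable def Ha (n k : ℕ) : ℚ :=
  48*(3*(n:ℚ)+5)*(k:ℚ)^3 * ((n+2).choose k : ℚ) * ((n+2*k).choose (2*k) : ℚ)
    * ((2*k).choose k : ℚ) * (-4)^(n+2-k)

lemma bq_zero {n k : ℕ} (h : n < k) : bq n k = 0 := by
  simp [bq, Nat.choose_eq_zero_of_lt h]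

lemma aq_zero {n k : ℕ} (h : n < k) : aq n k = 0 := by
  simp [aq, Nat.choose_eq_zero_of_lt h]

lemma key_b (n k : ℕ) :
    ((n:ℚ)+1)^3*((n:ℚ)+2)^3 *
      (8*((n:ℚ)+1)^2 * bq n k
        + (7*(n:ℚ)^2+21*(n:ℚ)+16) * bq (n+1) k
        - ((n:ℚ)+2)^2 * bq (n+2) k)
    = Hf n (k+1) - Hf n k := by
  rcases le_or_gt k n with h | h
  · obtain ⟨m, rfl⟩ := Nat.le.dest h
    unfold bq Hf
    rw [Nat.cast_choose ℚ (show k ≤ k+m by omega),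
        Nat.cast_choose ℚ (show k ≤ k+m+1 by omega),
        Nat.cast_choose ℚ (show k ≤ k+m+2 by omega),
        Nat.cast_choose ℚ (show k+1 ≤ k+m+2 by omega)]
    rw [show k+m-k = m by omega, show k+m+1-k = m+1 by omega,
        show k+m+2-k = m+2 by omega, show k+m+2-(k+1) = m+1 by omega]
    rw [show (k+m+2)! = (k+m+2)*((k+m+1)*(k+m)!) by
          rw [Nat.factorial_succ, Nat.factorial_succ],
        show (k+m+1)! = (k+m+1)*(k+m)! from Nat.factorial_succ _,
        show (m+2)! = (m+2)*((m+1)*(m)!) by rw [Nat.factorial_succ, Nat.factorial_succ],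
        show (m+1)! = (m+1)*(m)! from Nat.factorial_succ _,
        show (k+1)! = (k+1)*(k)! from Nat.factorial_succ _]
    have h1 : ((k+m)! : ℚ) ≠ 0 := Nat.cast_ne_zero.mpr (Nat.factorial_ne_zero _)
    have h2 : ((k)! : ℚ) ≠ 0 := Nat.cast_ne_zero.mpr (Nat.factorial_ne_zero _)
    have h3 : ((m)! : ℚ) ≠ 0 := Nat.cast_ne_zero.mpr (Nat.factorial_ne_zero _)
    have h4 : ((m:ℚ)+1) ≠ 0 := by positivity
    have h5 : ((m:ℚ)+2) ≠ 0 := by positivity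
    have h6 : ((k:ℚ)+1) ≠ 0 := by positivity
    push_cast
    field_simp
    ring
  · rcases (by omega : k = n+1 ∨ k = n+2 ∨ n+3 ≤ k) with rfl | rfl | hk
    · unfold bq Hf
      rw [Nat.choose_succ_self, Nat.choose_self,
          show (n+2).choose (n+1) = n+2 from Nat.choose_succ_self_right (n+1),
          show (n+2).choose (n+1+1) = 1 by rw [Nat.choose_self]]
      push_cast
      ring
    · unfold bq Hf
      rw [Nat.choose_eq_zero_of_lt (show n < n+2 by omega),
          Nat.choose_eq_zero_of_lt (show n+1 < n+2 by omega),
          Nat.choose_self, show (n+2).choose (n+2+1) = 0 from Nat.choose_succ_self _]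
      push_cast
      ring
    · unfold bq Hf
      rw [Nat.choose_eq_zero_of_lt (show n < k by omega),
          Nat.choose_eq_zero_of_lt (show n+1 < k by omega),
          Nat.choose_eq_zero_of_lt (show n+2 < k by omega),
          Nat.choose_eq_zero_of_lt (show n+2 < k+1 by omega)]
      push_cast
      ring

lemma key_a (n k : ℕ) :
    16*((n:ℚ)+1)*((n:ℚ)+2) *
      (8*((n:ℚ)+1)^2 * aq n k
        + (7*(n:ℚ)^2+21*(n:ℚ)+16) * aq (n+1) k
        - ((n:ℚ)+2)^2 * aq (n+2) k)
    = Ha n (k+1) - Ha n k := by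
  rcases le_or_gt k n with h | h
  · obtain ⟨m, rfl⟩ := Nat.le.dest h
    unfold aq Ha
    rw [show k+m+2*k = 3*k+m by omega, show k+m+1+2*k = 3*k+m+1 by omega,
        show k+m+2+2*k = 3*k+m+2 by omega, show k+m+2*(k+1) = 3*k+m+2 by omega,
        show 2*(k+1) = 2*k+2 by omega,
        show k+m-k = m by omega, show k+m+1-k = m+1 by omega,
        show k+m+2-k = m+2 by omega, show k+m+2-(k+1) = m+1 by omega]
    rw [Nat.cast_choose ℚ (show k ≤ k+m by omega),
        Nat.cast_choose ℚ (show k ≤ k+m+1 by omega),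
        Nat.cast_choose ℚ (show k ≤ k+m+2 by omega),
        Nat.cast_choose ℚ (show k+1 ≤ k+m+2 by omega),
        Nat.cast_choose ℚ (show 2*k ≤ 3*k+m by omega),
        Nat.cast_choose ℚ (show 2*k ≤ 3*k+m+1 by omega),
        Nat.cast_choose ℚ (show 2*k ≤ 3*k+m+2 by omega),
        Nat.cast_choose ℚ (show 2*k+2 ≤ 3*k+m+2 by omega),
        Nat.cast_choose ℚ (show k ≤ 2*k by omega),
        Nat.cast_choose ℚ (show k+1 ≤ 2*k+2 by omega)]
    rw [show k+m-k = m by omega, show k+m+1-k = m+1 by omega,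
        show k+m+2-k = m+2 by omega, show k+m+2-(k+1) = m+1 by omega,
        show 3*k+m-2*k = k+m by omega, show 3*k+m+1-2*k = k+m+1 by omega,
        show 3*k+m+2-2*k = k+m+2 by omega, show 3*k+m+2-(2*k+2) = k+m by omega,
        show 2*k-k = k by omega, show 2*k+2-(k+1) = k+1 by omega]
    rw [show (3*k+m+2)! = (3*k+m+2)*((3*k+m+1)*(3*k+m)!) by
          rw [Nat.factorial_succ, Nat.factorial_succ],
        show (3*k+m+1)! = (3*k+m+1)*(3*k+m)! from Nat.factorial_succ _,
        show (k+m+2)! = (k+m+2)*((k+m+1)*(k+m)!) by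
          rw [Nat.factorial_succ, Nat.factorial_succ],
        show (k+m+1)! = (k+m+1)*(k+m)! from Nat.factorial_succ _,
        show (2*k+2)! = (2*k+2)*((2*k+1)*(2*k)!) by
          rw [show 2*k+2 = (2*k+1)+1 by omega, Nat.factorial_succ, Nat.factorial_succ],
        show (m+2)! = (m+2)*((m+1)*(m)!) by rw [Nat.factorial_succ, Nat.factorial_succ],
        show (m+1)! = (m+1)*(m)! from Nat.factorial_succ _,
        show (k+1)! = (k+1)*(k)! from Nat.factorial_succ _]
    have h1 : ((k+m)! : ℚ) ≠ 0 := Nat.cast_ne_zero.mpr (Nat.factorial_ne_zero _)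
    have h2 : ((k)! : ℚ) ≠ 0 := Nat.cast_ne_zero.mpr (Nat.factorial_ne_zero _)
    have h3 : ((m)! : ℚ) ≠ 0 := Nat.cast_ne_zero.mpr (Nat.factorial_ne_zero _)
    have h4 : ((2*k)! : ℚ) ≠ 0 := Nat.cast_ne_zero.mpr (Nat.factorial_ne_zero _)
    have h5 : ((3*k+m)! : ℚ) ≠ 0 := Nat.cast_ne_zero.mpr (Nat.factorial_ne_zero _)
    have h6 : ((m:ℚ)+1) ≠ 0 := by positivity
    have h7 : ((m:ℚ)+2) ≠ 0 := by positivity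
    have h8 : ((k:ℚ)+1) ≠ 0 := by positivity
    have h9 : (2*(k:ℚ)+1) ≠ 0 := by positivity
    have h10 : (2*(k:ℚ)+2) ≠ 0 := by positivity
    have h11 : ((-4:ℚ))^m ≠ 0 := pow_ne_zero _ (by norm_num)
    push_cast
    field_simp
    ring
  · rcases (by omega : k = n+1 ∨ k = n+2 ∨ n+3 ≤ k) with rfl | rfl | hk
    · unfold aq Ha
      rw [Nat.choose_succ_self, Nat.choose_self,
          show (n+2).choose (n+1) = n+2 from Nat.choose_succ_self_right (n+1),
          show (n+2).choose (n+1+1) = 1 by rw [Nat.choose_self]]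
      rw [show n+1+2*(n+1) = 3*n+3 by omega, show n+2+2*(n+1) = 3*n+4 by omega,
          show n+2*(n+1) = 3*n+2 by omega, show n+2*((n+1)+1) = 3*n+4 by omega,
          show 2*((n+1)+1) = 2*n+4 by omega, show 2*(n+1) = 2*n+2 by omega,
          show n+1-(n+1) = 0 by omega, show n+2-(n+1) = 1 by omega,
          show n+2-(n+1+1) = 0 by omega, show n-(n+1) = 0 by omega]
      rw [Nat.cast_choose ℚ (show 2*n+2 ≤ 3*n+3 by omega),
          Nat.cast_choose ℚ (show 2*n+2 ≤ 3*n+4 by omega),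
          Nat.cast_choose ℚ (show 2*n+2 ≤ 3*n+2 by omega),
          Nat.cast_choose ℚ (show 2*n+4 ≤ 3*n+4 by omega),
          Nat.cast_choose ℚ (show n+1 ≤ 2*n+2 by omega),
          Nat.cast_choose ℚ (show n+2 ≤ 2*n+4 by omega)]
      rw [show 3*n+3-(2*n+2) = n+1 by omega, show 3*n+4-(2*n+2) = n+2 by omega,
          show 3*n+2-(2*n+2) = n by omega, show 3*n+4-(2*n+4) = n by omega,
          show 2*n+2-(n+1) = n+1 by omega, show 2*n+4-(n+2) = n+2 by omega]
      rw [show (3*n+4)! = (3*n+4)*((3*n+3)*(3*n+2)!) by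
            rw [show 3*n+4 = (3*n+3)+1 by omega, Nat.factorial_succ,
                show 3*n+3 = (3*n+2)+1 by omega, Nat.factorial_succ],
          show (3*n+3)! = (3*n+3)*(3*n+2)! by
            rw [show 3*n+3 = (3*n+2)+1 by omega, Nat.factorial_succ],
          show (2*n+4)! = (2*n+4)*((2*n+3)*(2*n+2)!) by
            rw [show 2*n+4 = (2*n+3)+1 by omega, Nat.factorial_succ,
                show 2*n+3 = (2*n+2)+1 by omega, Nat.factorial_succ],
          show (n+2)! = (n+2)*((n+1)*(n)!) by rw [Nat.factorial_succ, Nat.factorial_succ],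
          show (n+1)! = (n+1)*(n)! from Nat.factorial_succ _]
      have h1 : ((n)! : ℚ) ≠ 0 := Nat.cast_ne_zero.mpr (Nat.factorial_ne_zero _)
      have h2 : ((2*n+2)! : ℚ) ≠ 0 := Nat.cast_ne_zero.mpr (Nat.factorial_ne_zero _)
      have h3 : ((3*n+2)! : ℚ) ≠ 0 := Nat.cast_ne_zero.mpr (Nat.factorial_ne_zero _)
      have h4 : ((n:ℚ)+1) ≠ 0 := by positivity
      have h5 : ((n:ℚ)+2) ≠ 0 := by positivity
      have h6 : (2*(n:ℚ)+3) ≠ 0 := by positivity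
      have h7 : (2*(n:ℚ)+4) ≠ 0 := by positivity
      push_cast
      field_simp
      ring
    · unfold aq Ha
      rw [Nat.choose_eq_zero_of_lt (show n < n+2 by omega),
          Nat.choose_eq_zero_of_lt (show n+1 < n+2 by omega),
          Nat.choose_self, show (n+2).choose (n+2+1) = 0 from Nat.choose_succ_self _]
      rw [show n+2+2*(n+2) = 3*n+6 by omega, show n+2*(n+2) = 3*n+4 by omega,
          show 2*(n+2) = 2*n+4 by omega, show n+2-(n+2) = 0 by omega]
      rw [Nat.cast_choose ℚ (show 2*n+4 ≤ 3*n+6 by omega),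
          Nat.cast_choose ℚ (show 2*n+4 ≤ 3*n+4 by omega),
          Nat.cast_choose ℚ (show n+2 ≤ 2*n+4 by omega)]
      rw [show 3*n+6-(2*n+4) = n+2 by omega, show 3*n+4-(2*n+4) = n by omega,
          show 2*n+4-(n+2) = n+2 by omega]
      rw [show (3*n+6)! = (3*n+6)*((3*n+5)*(3*n+4)!) by
            rw [show 3*n+6 = (3*n+5)+1 by omega, Nat.factorial_succ,
                show 3*n+5 = (3*n+4)+1 by omega, Nat.factorial_succ],
          show (n+2)! = (n+2)*((n+1)*(n)!) by rw [Nat.factorial_succ, Nat.factorial_succ]]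
      have h1 : ((n)! : ℚ) ≠ 0 := Nat.cast_ne_zero.mpr (Nat.factorial_ne_zero _)
      have h2 : ((2*n+4)! : ℚ) ≠ 0 := Nat.cast_ne_zero.mpr (Nat.factorial_ne_zero _)
      have h3 : ((3*n+4)! : ℚ) ≠ 0 := Nat.cast_ne_zero.mpr (Nat.factorial_ne_zero _)
      have h4 : ((n:ℚ)+1) ≠ 0 := by positivity
      have h5 : ((n:ℚ)+2) ≠ 0 := by positivity
      push_cast
      field_simp
      ring
    · unfold aq Ha
      rw [Nat.choose_eq_zero_of_lt (show n < k by omega),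
          Nat.choose_eq_zero_of_lt (show n+1 < k by omega),
          Nat.choose_eq_zero_of_lt (show n+2 < k by omega),
          Nat.choose_eq_zero_of_lt (show n+2 < k+1 by omega)]
      push_cast
      ring

lemma rec_b (n : ℕ) :
    ((n:ℚ)+2)^2 * (∑ k ∈ range (n+2+1), bq (n+2) k)
      = (7*(n:ℚ)^2+21*(n:ℚ)+16) * (∑ k ∈ range (n+1+1), bq (n+1) k)
        + 8*((n:ℚ)+1)^2 * (∑ k ∈ range (n+1), bq n k) := by
  have e1 : ∑ k ∈ range (n+1), bq n k = ∑ k ∈ range (n+2+1), bq n k := by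
    apply Finset.sum_subset (Finset.range_subset_range.mpr (by omega))
    intro x _ hnx
    exact bq_zero (by simp at hnx; omega)
  have e2 : ∑ k ∈ range (n+1+1), bq (n+1) k = ∑ k ∈ range (n+2+1), bq (n+1) k := by
    apply Finset.sum_subset (Finset.range_subset_range.mpr (by omega))
    intro x _ hnx
    exact bq_zero (by simp at hnx; omega)
  have tele : ∑ k ∈ range (n+2+1), (Hf n (k+1) - Hf n k) = Hf n (n+2+1) - Hf n 0 :=
    Finset.sum_range_sub (Hf n) (n+2+1)
  have h0 : Hf n 0 = 0 := by simp [Hf]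
  have h3 : Hf n (n+2+1) = 0 := by
    have hc : (n+2).choose (n+2+1) = 0 := Nat.choose_succ_self (n+2)
    simp [Hf, hc]
  have sum0 : ∑ k ∈ range (n+2+1),
      (((n:ℚ)+1)^3*((n:ℚ)+2)^3 *
        (8*((n:ℚ)+1)^2 * bq n k
          + (7*(n:ℚ)^2+21*(n:ℚ)+16) * bq (n+1) k
          - ((n:ℚ)+2)^2 * bq (n+2) k)) = 0 := by
    rw [Finset.sum_congr rfl fun k _ => key_b n k, tele, h0, h3]
    ring
  rw [← Finset.mul_sum] at sum0
  have hne : (((n:ℚ)+1)^3*((n:ℚ)+2)^3) ≠ 0 := by positivity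
  have hz := (mul_eq_zero.mp sum0).resolve_left hne
  rw [Finset.sum_sub_distrib, Finset.sum_add_distrib, ← Finset.mul_sum, ← Finset.mul_sum,
      ← Finset.mul_sum] at hz
  rw [e1, e2]
  linarith [hz]

lemma rec_a (n : ℕ) :
    ((n:ℚ)+2)^2 * (∑ k ∈ range (n+2+1), aq (n+2) k)
      = (7*(n:ℚ)^2+21*(n:ℚ)+16) * (∑ k ∈ range (n+1+1), aq (n+1) k)
        + 8*((n:ℚ)+1)^2 * (∑ k ∈ range (n+1), aq n k) := by
  have e1 : ∑ k ∈ range (n+1), aq n k = ∑ k ∈ range (n+2+1), aq n k := by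
    apply Finset.sum_subset (Finset.range_subset_range.mpr (by omega))
    intro x _ hnx
    exact aq_zero (by simp at hnx; omega)
  have e2 : ∑ k ∈ range (n+1+1), aq (n+1) k = ∑ k ∈ range (n+2+1), aq (n+1) k := by
    apply Finset.sum_subset (Finset.range_subset_range.mpr (by omega))
    intro x _ hnx
    exact aq_zero (by simp at hnx; omega)
  have tele : ∑ k ∈ range (n+2+1), (Ha n (k+1) - Ha n k) = Ha n (n+2+1) - Ha n 0 :=
    Finset.sum_range_sub (Ha n) (n+2+1)
  have h0 : Ha n 0 = 0 := by simp [Ha]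
  have h3 : Ha n (n+2+1) = 0 := by
    have hc : (n+2).choose (n+2+1) = 0 := Nat.choose_succ_self (n+2)
    simp [Ha, hc]
  have sum0 : ∑ k ∈ range (n+2+1),
      (16*((n:ℚ)+1)*((n:ℚ)+2) *
        (8*((n:ℚ)+1)^2 * aq n k
          + (7*(n:ℚ)^2+21*(n:ℚ)+16) * aq (n+1) k
          - ((n:ℚ)+2)^2 * aq (n+2) k)) = 0 := by
    rw [Finset.sum_congr rfl fun k _ => key_a n k, tele, h0, h3]
    ring
  rw [← Finset.mul_sum] at sum0
  have hne : (16*((n:ℚ)+1)*((n:ℚ)+2)) ≠ 0 := by positivity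
  have hz := (mul_eq_zero.mp sum0).resolve_left hne
  rw [Finset.sum_sub_distrib, Finset.sum_add_distrib, ← Finset.mul_sum, ← Finset.mul_sum,
      ← Finset.mul_sum] at hz
  rw [e1, e2]
  linarith [hz]

lemma main_q : ∀ n : ℕ, ∑ k ∈ range (n+1), aq n k = ∑ k ∈ range (n+1), bq n k := by
  intro n
  induction n using Nat.strong_induction_on with
  | _ n ih =>
    rcases n with _ | n
    · norm_num [aq, bq]
    · rcases n with _ | m
      · have c1 : Nat.choose 3 2 = 3 := by decide
        have c2 : Nat.choose 2 1 = 2 := by decide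
        norm_num [aq, bq, Finset.sum_range_succ, c1, c2]
      · have h1 := ih (m+1) (by omega)
        have h0 := ih m (by omega)
        have ra := rec_a m
        have rb := rec_b m
        have hne : ((m:ℚ)+2)^2 ≠ 0 := by positivity
        apply mul_left_cancel₀ hne
        rw [ra, rb, h1, h0]

end FranelCert

theorem F_at_neg_four_eq_franel (n : ℕ) :
    ∑ k ∈ Finset.range (n + 1),
        (Nat.choose n k * Nat.choose (n + 2 * k) (2 * k) * Nat.choose (2 * k) k : ℤ) *
          (-4) ^ (n - k) =
      ∑ k ∈ Finset.range (n + 1), (Nat.choose n k : ℤ) ^ 3 := by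
  have h := FranelCert.main_q n
  have hq : ((∑ k ∈ Finset.range (n + 1),
        (Nat.choose n k * Nat.choose (n + 2 * k) (2 * k) * Nat.choose (2 * k) k : ℤ) *
          (-4) ^ (n - k) : ℤ) : ℚ)
      = ((∑ k ∈ Finset.range (n + 1), (Nat.choose n k : ℤ) ^ 3 : ℤ) : ℚ) := by
    push_cast
    simpa [FranelCert.aq, FranelCert.bq] using h
  exact_mod_cast hq
end
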